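/- Let d ≥ 1 be an integer and p ∈ (0,1). A pmf q on {0,…,d} has mean dp if and only if there exists a d-dimensional exchangeable Bernoulli vector X = (X_1,…,X_d) with marginal parameter p such that the number of defaults S_d = X_1 + … + X_d has pmf q; moreover, in that case q(j) = C(d,j)·f_j, where f_j is the common value of the joint pmf of X on any point of {0,1}^d with exactly j coordinates equal to 1. In particular, the class S_d(p) of pmfs of S_d arising from exchangeable Bernoulli vectors with marginal p coincides with the class D(dp) of all pmfs on {0,…,d} with mean dp. -/

import Mathlib

open Finset

private def wt {d : ℕ} (x : Fin d → Bool) : ℕ := (Finset.univ.filter (fun i => x i = true)).card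

private lemma wt_le {d : ℕ} (x : Fin d → Bool) : wt x ≤ d := by
  simpa [wt] using (Finset.card_filter_le Finset.univ (fun i => x i = true)).trans (by simp)

private lemma wt_comp {d : ℕ} (x : Fin d → Bool) (σ : Equiv.Perm (Fin d)) :
    wt (x ∘ σ) = wt x := by
  unfold wt
  apply Finset.card_bij' (fun a _ => σ a) (fun a _ => σ.symm a) <;> simp

private lemma card_fiber (d j : ℕ) :
    (Finset.univ.filter (fun x : Fin d → Bool => wt x = j)).card = d.choose j := by
  rw [show d.choose j = (Finset.powersetCard j (Finset.univ : Finset (Fin d))).card from by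
    simp]
  · apply Finset.card_bij (fun x _ => Finset.univ.filter (fun i => x i = true))
    · intro x hx
      simp only [Finset.mem_filter, wt] at hx
      simp [Finset.mem_powersetCard]; exact (Finset.mem_filter.1 hx).2
    · intro x hx y hy h
      funext i
      have : (i ∈ Finset.univ.filter (fun i => x i = true)) ↔
          (i ∈ Finset.univ.filter (fun i => y i = true)) := by rw [h]
      simp only [Finset.mem_filter, Finset.mem_univ, true_and] at this
      cases hx' : x i <;> cases hy' : y i <;> simp_all
    · intro s hs
      simp only [Finset.mem_powersetCard] at hs
      refine ⟨fun i => decide (i ∈ s), ?_, ?_⟩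
      · refine Finset.mem_filter.2 ⟨Finset.mem_univ _, ?_⟩
        show (Finset.univ.filter (fun i => decide (i ∈ s) = true)).card = j
        rw [← hs.2]
        congr 1
        ext i; simp
      · ext i; simp

private lemma sum_weight {d : ℕ} (f : (Fin d → Bool) → ℝ) :
    ∑ x, (wt x : ℝ) * f x
      = ∑ i : Fin d, ∑ x ∈ Finset.univ.filter (fun x : Fin d → Bool => x i = true), f x := by
  have : ∀ x : Fin d → Bool, (wt x : ℝ) * f x = ∑ i ∈ Finset.univ.filter (fun i => x i = true), f x := by
    intro x
    rw [Finset.sum_const, wt, nsmul_eq_mul]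
  simp_rw [this, Finset.sum_filter]
  rw [Finset.sum_comm]

theorem stmt_0 (d : ℕ) (hd : 1 ≤ d) (p : ℝ) (hp : p ∈ Set.Ioo (0 : ℝ) 1)
    (q : ℕ → ℝ) (hq0 : ∀ j ∈ Finset.range (d + 1), 0 ≤ q j)
    (hq1 : ∑ j ∈ Finset.range (d + 1), q j = 1) :
    (∑ j ∈ Finset.range (d + 1), (j : ℝ) * q j = d * p) ↔
    ∃ f : (Fin d → Bool) → ℝ,
      (∀ x, 0 ≤ f x) ∧
      (∑ x, f x = 1) ∧
      (∀ σ : Equiv.Perm (Fin d), ∀ x, f (x ∘ σ) = f x) ∧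
      (∀ i : Fin d,
        ∑ x ∈ Finset.univ.filter (fun x : Fin d → Bool => x i = true), f x = p) ∧
      (∀ j ∈ Finset.range (d + 1),
        q j = ∑ x ∈ Finset.univ.filter
          (fun x : Fin d → Bool => (Finset.univ.filter (fun i => x i = true)).card = j), f x) ∧
      (∀ j ∈ Finset.range (d + 1), ∀ x : Fin d → Bool,
        (Finset.univ.filter (fun i => x i = true)).card = j →
        q j = (d.choose j : ℝ) * f x) := by
  constructor
  · intro hmean
    set f : (Fin d → Bool) → ℝ := fun x => q (wt x) / (d.choose (wt x)) with hf
    have hchoosepos : ∀ x : Fin d → Bool, (0:ℝ) < (d.choose (wt x) : ℝ) := fun x =>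
      Nat.cast_pos.2 (Nat.choose_pos (wt_le x))
    have hmem : ∀ x : Fin d → Bool, wt x ∈ Finset.range (d + 1) := fun x =>
      Finset.mem_range.2 (Nat.lt_succ_of_le (wt_le x))
    have hf0 : ∀ x, 0 ≤ f x := fun x => div_nonneg (hq0 _ (hmem x)) (hchoosepos x).le
    have hperm : ∀ σ : Equiv.Perm (Fin d), ∀ x, f (x ∘ σ) = f x := by
      intro σ x; simp [hf, wt_comp]
    -- fiber sums
    have hfibersum : ∀ j ∈ Finset.range (d + 1),
        ∑ x ∈ Finset.univ.filter (fun x : Fin d → Bool => wt x = j), f x = q j := by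
      intro j hj
      have h1 : ∀ x ∈ Finset.univ.filter (fun x : Fin d → Bool => wt x = j),
          f x = q j / (d.choose j : ℝ) := by
        intro x hx
        simp only [Finset.mem_filter] at hx
        rw [hf]; simp [hx.2]
      rw [Finset.sum_congr rfl h1, Finset.sum_const, card_fiber, nsmul_eq_mul]
      have hjd : j ≤ d := Nat.lt_succ_iff.1 (Finset.mem_range.1 hj)
      have : ((d.choose j : ℝ)) ≠ 0 := Nat.cast_ne_zero.2 (Nat.choose_pos hjd).ne'
      field_simp
    have hsum1 : ∑ x, f x = 1 := by
      rw [← Finset.sum_fiberwise_of_maps_to (g := wt) (fun x _ => hmem x) f, ← hq1]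
      exact Finset.sum_congr rfl hfibersum
    -- weighted sum
    have hwsum : ∑ x, (wt x : ℝ) * f x = d * p := by
      rw [← Finset.sum_fiberwise_of_maps_to (g := wt) (fun x _ => hmem x)
        (fun x => (wt x : ℝ) * f x), ← hmean]
      refine Finset.sum_congr rfl fun j hj => ?_
      have h1 : ∀ x ∈ Finset.univ.filter (fun x : Fin d → Bool => wt x = j),
          (wt x : ℝ) * f x = (j : ℝ) * f x := by
        intro x hx
        simp only [Finset.mem_filter] at hx
        rw [hx.2]
      rw [Finset.sum_congr rfl h1, ← Finset.mul_sum, hfibersum j hj]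
    -- marginals equal
    have hMeq : ∀ i i' : Fin d,
        (∑ x ∈ Finset.univ.filter (fun x : Fin d → Bool => x i = true), f x)
          = ∑ x ∈ Finset.univ.filter (fun x : Fin d → Bool => x i' = true), f x := by
      intro i i'
      apply Finset.sum_nbij' (fun x => x ∘ Equiv.swap i i') (fun x => x ∘ Equiv.swap i i')
      · intro x hx
        simp only [Finset.mem_filter, Finset.mem_univ, true_and] at hx ⊢
        simpa [Equiv.swap_apply_right] using hx
      · intro x hx
        simp only [Finset.mem_filter, Finset.mem_univ, true_and] at hx ⊢
        simpa [Equiv.swap_apply_left] using hx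
      · intro x _; funext a; simp
      · intro x _; funext a; simp
      · intro x _; exact (hperm (Equiv.swap i i') x).symm
    have hmarg : ∀ i : Fin d,
        ∑ x ∈ Finset.univ.filter (fun x : Fin d → Bool => x i = true), f x = p := by
      intro i
      have hsum : ∑ i' : Fin d,
          (∑ x ∈ Finset.univ.filter (fun x : Fin d → Bool => x i' = true), f x) = d * p := by
        rw [← sum_weight, hwsum]
      have : (d : ℝ) * (∑ x ∈ Finset.univ.filter (fun x : Fin d → Bool => x i = true), f x)
          = (d : ℝ) * p := by
        rw [← hsum]
        rw [Finset.sum_congr rfl (fun i' _ => hMeq i' i), Finset.sum_const, Finset.card_univ,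
          Fintype.card_fin, nsmul_eq_mul]
      have hd0 : (d : ℝ) ≠ 0 := Nat.cast_ne_zero.2 (by omega)
      exact mul_left_cancel₀ hd0 this
    refine ⟨f, hf0, hsum1, hperm, hmarg, ?_, ?_⟩
    · intro j hj
      exact (hfibersum j hj).symm
    · intro j hj x hx
      have hxw : wt x = j := hx
      have hjd : j ≤ d := Nat.lt_succ_iff.1 (Finset.mem_range.1 hj)
      have hc : ((d.choose j : ℝ)) ≠ 0 := Nat.cast_ne_zero.2 (Nat.choose_pos hjd).ne'
      rw [hf]; simp only [hxw]
      field_simp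
  · rintro ⟨f, hf0, hf1, hperm, hmarg, hfib, hchoose⟩
    have hmem : ∀ x : Fin d → Bool, wt x ∈ Finset.range (d + 1) := fun x =>
      Finset.mem_range.2 (Nat.lt_succ_of_le (wt_le x))
    have : ∑ j ∈ Finset.range (d + 1), (j : ℝ) * q j = ∑ x, (wt x : ℝ) * f x := by
      rw [← Finset.sum_fiberwise_of_maps_to (g := wt) (fun x _ => hmem x)
        (fun x => (wt x : ℝ) * f x)]
      refine Finset.sum_congr rfl fun j hj => ?_
      have h1 : ∀ x ∈ Finset.univ.filter (fun x : Fin d → Bool => wt x = j),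
          (wt x : ℝ) * f x = (j : ℝ) * f x := by
        intro x hx
        simp only [Finset.mem_filter] at hx
        rw [hx.2]
      rw [Finset.sum_congr rfl h1, ← Finset.mul_sum, hfib j hj]
      rfl
    rw [this, sum_weight, Finset.sum_congr rfl (fun i _ => hmarg i), Finset.sum_const,
      Finset.card_univ, Fintype.card_fin, nsmul_eq_mul]
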